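/- Let n be a positive integer. Let P be the set of matrices A ∈ M_n(ℂ) such that A is positive semidefinite and the Schur map S_A is multiplicative. Then the map Φ sending A ∈ P to the vector (A_{1,2}, A_{1,3}, …, A_{1,n}) of off-diagonal first-row entries is a bijection from P onto the set of vectors in ℂ^{n−1} all of whose coordinates have modulus 1; moreover Φ(A ∘ B) equals the coordinatewise product Φ(A)·Φ(B) for all A, B ∈ P. (Thus P, with the Schur product, is isomorphic as a group to the (n−1)-torus.) -/

import Mathlib

open Matrix
open scoped ComplexOrder

lemma schur_key {m : Type*} [Fintype m] [DecidableEq m]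
    (A : Matrix m m ℂ)
    (h : ∀ B C : Matrix m m ℂ, hadamard A (B*C) = hadamard A B * hadamard A C)
    (i j k : m) : A i j = A i k * A k j := by
  have h2 := congrFun (congrFun (h (Matrix.single i k 1) (Matrix.single k j 1)) i) j
  rw [Matrix.single_mul_single_same] at h2
  simpa [hadamard_apply, mul_apply, Matrix.single, Finset.mul_sum] using h2

-- structure lemma: for A in P, A 0 0 = 1 and |A 0 k| = 1 and A j k = conj (A 0 j) * A 0 k
lemma schur_struct {m : ℕ} (A : Matrix (Fin (m+1)) (Fin (m+1)) ℂ)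
    (hA0 : A ≠ 0) (hpsd : A.PosSemidef)
    (h : ∀ B C, hadamard A (B*C) = hadamard A B * hadamard A C) :
    A 0 0 = 1 ∧ (∀ k, ‖A 0 k‖ = 1) ∧
      (∀ j k, A j k = starRingEnd ℂ (A 0 j) * A 0 k) := by
  have key := schur_key A h
  obtain ⟨i, j, hij⟩ : ∃ i j, A i j ≠ 0 := by
    by_contra hc
    push_neg at hc
    exact hA0 (by ext a b; simp [hc])
  have hii : A i i = 1 := by
    have h1 : (A i i - 1) * A i j = 0 := by linear_combination (key i j i).symm
    rcases mul_eq_zero.mp h1 with h2 | h2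
    · exact sub_eq_zero.mp h2
    · exact absurd h2 hij
  have hkk : ∀ k, A k k = 1 := by
    intro k
    have h1 : A i k * A k i = 1 := by rw [← key i i k, hii]
    have h2 : A k i ≠ 0 := fun hz => by simp [hz] at h1
    have h3 : (A k k - 1) * A k i = 0 := by linear_combination (key k i k).symm
    rcases mul_eq_zero.mp h3 with h4 | h4
    · exact sub_eq_zero.mp h4
    · exact absurd h4 h2
  have herm : ∀ a b, A a b = starRingEnd ℂ (A b a) := by
    intro a b
    have := hpsd.isHermitian
    rw [Matrix.IsHermitian] at this
    simpa [conjTranspose_apply] using (congrFun (congrFun this a) b).symm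
  have habs : ∀ k, ‖A 0 k‖ = 1 := by
    intro k
    have h1 : A 0 k * A k 0 = 1 := by rw [← key 0 0 k, hkk]
    rw [herm k 0] at h1
    have : (‖A 0 k‖)^2 = 1 := by
      have := Complex.mul_conj (A 0 k)
      rw [this] at h1
      rw [Complex.sq_norm]
      exact_mod_cast h1
    nlinarith [norm_nonneg (A 0 k)]
  refine ⟨hkk 0, habs, fun j k => ?_⟩
  rw [key j k 0, ← herm j 0]

lemma schur_mk {m : ℕ} (w : Fin (m+1) → ℂ) (hw : ∀ l, starRingEnd ℂ (w l) * w l = 1) :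
    (Matrix.of fun j k => starRingEnd ℂ (w j) * w k : Matrix (Fin (m+1)) (Fin (m+1)) ℂ) ≠ 0 ∧
    (Matrix.of fun j k => starRingEnd ℂ (w j) * w k : Matrix (Fin (m+1)) (Fin (m+1)) ℂ).PosSemidef ∧
    ∀ B C : Matrix (Fin (m+1)) (Fin (m+1)) ℂ,
      hadamard (Matrix.of fun j k => starRingEnd ℂ (w j) * w k) (B*C) =
      hadamard (Matrix.of fun j k => starRingEnd ℂ (w j) * w k) B *
      hadamard (Matrix.of fun j k => starRingEnd ℂ (w j) * w k) C := by
  set A : Matrix (Fin (m+1)) (Fin (m+1)) ℂ := Matrix.of fun j k => starRingEnd ℂ (w j) * w k with hA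
  refine ⟨?_, ?_, ?_⟩
  · intro h
    have := congrFun (congrFun h 0) 0
    rw [hA] at this
    simp only [of_apply, Matrix.zero_apply] at this
    rw [hw 0] at this
    exact one_ne_zero this
  · have : A = (replicateRow Unit w)ᴴ * (replicateRow Unit w) := by
      ext j k
      simp [hA, mul_apply, conjTranspose_apply, replicateRow]
    rw [this]
    exact posSemidef_conjTranspose_mul_self _
  · intro B C
    ext j k
    simp only [hadamard_apply, mul_apply, hA, of_apply, Finset.mul_sum]
    apply Finset.sum_congr rfl
    intro l _
    have := hw l
    linear_combination (-(starRingEnd ℂ (w j) * w k * B j l * C l k)) * this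

theorem posSemidef_schur_multiplicative_torus (n : ℕ)
    (P : Set (Matrix (Fin (n + 1)) (Fin (n + 1)) ℂ))
    (hP : P = {A | A ≠ 0 ∧ A.PosSemidef ∧
      ∀ B C : Matrix (Fin (n + 1)) (Fin (n + 1)) ℂ,
        Matrix.hadamard A (B * C) = Matrix.hadamard A B * Matrix.hadamard A C})
    (Φ : Matrix (Fin (n + 1)) (Fin (n + 1)) ℂ → (Fin n → ℂ))
    (hΦ : ∀ A, ∀ i : Fin n, Φ A i = A 0 i.succ) :
    Set.BijOn Φ P {v : Fin n → ℂ | ∀ i, ‖v i‖ = 1} ∧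
      ∀ A ∈ P, ∀ B ∈ P, Φ (Matrix.hadamard A B) = Φ A * Φ B := by
  subst hP
  constructor
  · refine ⟨?_, ?_, ?_⟩
    · rintro A ⟨hA0, hpsd, hmul⟩
      obtain ⟨-, habs, -⟩ := schur_struct A hA0 hpsd hmul
      intro i
      rw [hΦ]
      exact habs i.succ
    · rintro A ⟨hA0, hApsd, hAmul⟩ B ⟨hB0, hBpsd, hBmul⟩ hAB
      obtain ⟨hA00, -, hArec⟩ := schur_struct A hA0 hApsd hAmul
      obtain ⟨hB00, -, hBrec⟩ := schur_struct B hB0 hBpsd hBmul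
      have h0 : ∀ l, A 0 l = B 0 l := by
        intro l
        induction l using Fin.cases with
        | zero => rw [hA00, hB00]
        | succ i => rw [← hΦ A i, hAB, hΦ B i]
      ext j k
      rw [hArec j k, hBrec j k, h0, h0]
    · intro v hv
      simp only [Set.mem_setOf_eq] at hv
      set w : Fin (n+1) → ℂ := Fin.cases 1 v with hwdef
      have hw : ∀ l, starRingEnd ℂ (w l) * w l = 1 := by
        intro l
        induction l using Fin.cases with
        | zero => simp [hwdef]
        | succ i =>
          have : w i.succ = v i := by simp [hwdef]
          rw [this, mul_comm, Complex.mul_conj, ← Complex.sq_norm, hv i]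
          norm_num
      obtain ⟨h1, h2, h3⟩ := schur_mk w hw
      refine ⟨_, ⟨h1, h2, h3⟩, ?_⟩
      funext i
      rw [hΦ]
      show starRingEnd ℂ (w 0) * w i.succ = v i
      simp [hwdef]
  · intro A _ B _
    funext i
    rw [hΦ, Pi.mul_apply, hΦ, hΦ]
    rfl
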